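/- Every metrizable closed subspace of the split interval is countable. -/

import Mathlib

open Filter Topology

/-- The split interval (double arrow space) `S = [0,1] × {0,1}` with the order topology
induced by the lexicographic order. -/
def DoubleArrow : Type := ↥(Set.Icc (0 : ℝ) 1) ×ₗ Bool

noncomputable instance : LinearOrder DoubleArrow :=
  inferInstanceAs (LinearOrder (↥(Set.Icc (0 : ℝ) 1) ×ₗ Bool))

noncomputable instance : TopologicalSpace DoubleArrow := Preorder.topology DoubleArrow

namespace DoubleArrowAux

instance : Fact ((0:ℝ) ≤ 1) := ⟨zero_le_one⟩

abbrev I01 : Type := ↥(Set.Icc (0 : ℝ) 1)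

/-- first coordinate -/
def fst (x : DoubleArrow) : I01 := (ofLex x).1
/-- second coordinate -/
def snd (x : DoubleArrow) : Bool := (ofLex x).2

theorem da_le_iff (a b : I01 × Bool) :
    (toLex a : DoubleArrow) ≤ toLex b ↔ a.1 < b.1 ∨ a.1 = b.1 ∧ a.2 ≤ b.2 :=
  Prod.Lex.le_iff (x := toLex a) (y := toLex b)

theorem da_lt_iff (a b : I01 × Bool) :
    (toLex a : DoubleArrow) < toLex b ↔ a.1 < b.1 ∨ a.1 = b.1 ∧ a.2 < b.2 :=
  Prod.Lex.lt_iff (x := toLex a) (y := toLex b)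

open Classical in
noncomputable def daSup (s : Set DoubleArrow) : DoubleArrow :=
  toLex (sSup (fst '' s),
    if (toLex (sSup (fst '' s), true) : DoubleArrow) ∈ s then true else false)

theorem isLUB_daSup (s : Set DoubleArrow) : IsLUB s (daSup s) := by
  classical
  set t : I01 := sSup (fst '' s) with hts
  set bb : Bool := if (toLex (t, true) : DoubleArrow) ∈ s then true else false with hbb
  constructor
  · intro y hy
    have h1 : fst y ≤ t := le_sSup ⟨y, hy, rfl⟩
    have : (toLex (fst y, snd y) : DoubleArrow) ≤ toLex (t, bb) := by
      rcases lt_or_eq_of_le h1 with h | h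
      · exact (da_le_iff _ _).mpr (Or.inl h)
      · cases hsy : snd y with
        | false => exact (da_le_iff _ _).mpr (Or.inr ⟨h, Bool.false_le _⟩)
        | true =>
            have hy' : (toLex (t, true) : DoubleArrow) ∈ s := by
              have : y = (toLex (t, true) : DoubleArrow) := by
                have : y = (toLex (fst y, snd y) : DoubleArrow) := rfl
                rw [this, hsy, h]
              rwa [this] at hy
            have hb : bb = true := by rw [hbb, if_pos hy']
            exact (da_le_iff _ _).mpr (Or.inr ⟨h, by rw [hb]⟩)
    exact this
  · intro u hu
    have hu1 : ∀ y ∈ s, fst y ≤ fst u := by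
      intro y hy
      rcases (da_le_iff (fst y, snd y) (fst u, snd u)).mp (hu hy) with h | h
      · exact le_of_lt h
      · exact le_of_eq h.1
    have h1 : t ≤ fst u := sSup_le (by rintro a ⟨y, hy, rfl⟩; exact hu1 y hy)
    have : (toLex (t, bb) : DoubleArrow) ≤ toLex (fst u, snd u) := by
      rcases lt_or_eq_of_le h1 with h | h
      · exact (da_le_iff _ _).mpr (Or.inl h)
      · by_cases h2 : (toLex (t, true) : DoubleArrow) ∈ s
        · have hb : bb = true := by rw [hbb, if_pos h2]
          rcases (da_le_iff (t, true) (fst u, snd u)).mp (hu h2) with h3 | h3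
          · exact absurd h3 (by rw [h]; exact lt_irrefl _)
          · exact (da_le_iff _ _).mpr (Or.inr ⟨h, by rw [hb]; exact h3.2⟩)
        · have hb : bb = false := by rw [hbb, if_neg h2]
          exact (da_le_iff _ _).mpr (Or.inr ⟨h, by rw [hb]; exact Bool.false_le _⟩)
    exact this

noncomputable instance : SupSet DoubleArrow := ⟨daSup⟩

noncomputable instance : CompleteLattice DoubleArrow :=
  completeLatticeOfSup _ isLUB_daSup

noncomputable instance : CompleteLinearOrder DoubleArrow :=
  { LinearOrder.toBiheytingAlgebra DoubleArrow, (inferInstance : CompleteLattice DoubleArrow),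
    (inferInstance : LinearOrder DoubleArrow) with }

instance : OrderTopology DoubleArrow := ⟨rfl⟩

instance : CompactSpace DoubleArrow := inferInstance

/-- In a second countable space with a partial order, the set of points having an open
neighborhood of which they are the minimum is countable. -/
theorem countable_minpts {X : Type*} [TopologicalSpace X]
    [SecondCountableTopology X] [PartialOrder X] :
    {x : X | ∃ U, IsOpen U ∧ x ∈ U ∧ U ⊆ Set.Ici x}.Countable := by
  have h : ∀ x ∈ {x : X | ∃ U, IsOpen U ∧ x ∈ U ∧ U ⊆ Set.Ici x},
      ∃ V ∈ TopologicalSpace.countableBasis X, x ∈ V ∧ V ⊆ Set.Ici x := by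
    rintro x ⟨U, hU, hxU, hUI⟩
    obtain ⟨V, hV, hxV, hVU⟩ :=
      (TopologicalSpace.isBasis_countableBasis X).exists_subset_of_mem_open hxU hU
    exact ⟨V, hV, hxV, hVU.trans hUI⟩
  choose! f hf1 hf2 hf3 using h
  have hinj : Set.InjOn f {x : X | ∃ U, IsOpen U ∧ x ∈ U ∧ U ⊆ Set.Ici x} := by
    intro x hx y hy hxy
    refine le_antisymm (hf3 x hx ?_) (hf3 y hy ?_)
    · rw [hxy]; exact hf2 y hy
    · rw [← hxy]; exact hf2 x hx
  refine Set.countable_of_injective_of_countable_image hinj ?_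
  exact (TopologicalSpace.countable_countableBasis X).mono
    (Set.image_subset_iff.mpr fun x hx => hf1 x hx)

/-- Dual version with maxima. -/
theorem countable_maxpts {X : Type*} [TopologicalSpace X]
    [SecondCountableTopology X] [PartialOrder X] :
    {x : X | ∃ U, IsOpen U ∧ x ∈ U ∧ U ⊆ Set.Iic x}.Countable := by
  have h : ∀ x ∈ {x : X | ∃ U, IsOpen U ∧ x ∈ U ∧ U ⊆ Set.Iic x},
      ∃ V ∈ TopologicalSpace.countableBasis X, x ∈ V ∧ V ⊆ Set.Iic x := by
    rintro x ⟨U, hU, hxU, hUI⟩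
    obtain ⟨V, hV, hxV, hVU⟩ :=
      (TopologicalSpace.isBasis_countableBasis X).exists_subset_of_mem_open hxU hU
    exact ⟨V, hV, hxV, hVU.trans hUI⟩
  choose! f hf1 hf2 hf3 using h
  have hinj : Set.InjOn f {x : X | ∃ U, IsOpen U ∧ x ∈ U ∧ U ⊆ Set.Iic x} := by
    intro x hx y hy hxy
    refine le_antisymm (hf3 y hy ?_) (hf3 x hx ?_)
    · rw [← hxy]; exact hf2 x hx
    · rw [hxy]; exact hf2 y hy
  refine Set.countable_of_injective_of_countable_image hinj ?_
  exact (TopologicalSpace.countable_countableBasis X).mono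
    (Set.image_subset_iff.mpr fun x hx => hf1 x hx)

/-- Every point of the double arrow space has an open neighborhood of which it is either
the minimum or the maximum. -/
theorem da_key (v : DoubleArrow) :
    (∃ U : Set DoubleArrow, IsOpen U ∧ v ∈ U ∧ U ⊆ Set.Ici v) ∨
    (∃ U : Set DoubleArrow, IsOpen U ∧ v ∈ U ∧ U ⊆ Set.Iic v) := by
  have hv : v = (toLex (fst v, snd v) : DoubleArrow) := rfl
  cases hsv : snd v with
  | true =>
    by_cases htop : ∀ y : DoubleArrow, y ≤ v
    · exact Or.inr ⟨Set.univ, isOpen_univ, trivial, fun y _ => htop y⟩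
    · push_neg at htop
      obtain ⟨w, hw⟩ := htop
      refine Or.inl ⟨Set.Ioo (toLex (fst v, false) : DoubleArrow) w, isOpen_Ioo, ⟨?_, hw⟩, ?_⟩
      · rw [hv, hsv]
        exact (da_lt_iff _ _).mpr (Or.inr ⟨rfl, Bool.false_lt_true⟩)
      · intro y hy
        rcases (da_lt_iff (fst v, false) (fst y, snd y)).mp hy.1 with h | h
        · exact le_of_lt ((da_lt_iff (fst v, snd v) (fst y, snd y)).mpr (Or.inl h))
        · have h1 : fst v = fst y := h.1
          have h2 : snd y = true := by
            cases hy2 : snd y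
            · rw [hy2] at h; exact absurd h.2 (lt_irrefl false)
            · rfl
          have hyv : y = v := by
            calc y = (show DoubleArrow from toLex (fst y, snd y)) := rfl
              _ = (show DoubleArrow from toLex (fst v, snd v)) := by rw [h2, hsv, ← h1]
              _ = v := rfl
          exact le_of_eq hyv.symm
  | false =>
    by_cases hbot : ∀ y : DoubleArrow, v ≤ y
    · exact Or.inl ⟨Set.univ, isOpen_univ, trivial, fun y _ => hbot y⟩
    · push_neg at hbot
      obtain ⟨w, hw⟩ := hbot
      refine Or.inr ⟨Set.Ioo w (toLex (fst v, true) : DoubleArrow), isOpen_Ioo, ⟨hw, ?_⟩, ?_⟩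
      · rw [hv, hsv]
        exact (da_lt_iff _ _).mpr (Or.inr ⟨rfl, Bool.false_lt_true⟩)
      · intro y hy
        rcases (da_lt_iff (fst y, snd y) (fst v, true)).mp hy.2 with h | h
        · exact le_of_lt ((da_lt_iff (fst y, snd y) (fst v, snd v)).mpr (Or.inl h))
        · have h1 : fst y = fst v := h.1
          have h2 : snd y = false := by
            cases hy2 : snd y
            · rfl
            · rw [hy2] at h; exact absurd h.2 (lt_irrefl true)
          have hyv : y = v := by
            calc y = (show DoubleArrow from toLex (fst y, snd y)) := rfl
              _ = (show DoubleArrow from toLex (fst v, snd v)) := by rw [h2, hsv, h1]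
              _ = v := rfl
          exact le_of_eq hyv
end DoubleArrowAux

open DoubleArrowAux in
/-- Every metrizable closed subspace of the split interval is countable. -/
theorem metrizable_closed_subspace_countable (L : Set DoubleArrow) (hL : IsClosed L)
    (hmet : TopologicalSpace.MetrizableSpace ↥L) : L.Countable := by
  haveI : CompactSpace ↥L := isCompact_iff_compactSpace.mp hL.isCompact
  haveI : SecondCountableTopology ↥L := inferInstance
  have key : ∀ x : ↥L, (∃ U, IsOpen U ∧ x ∈ U ∧ U ⊆ Set.Ici x) ∨
      (∃ U, IsOpen U ∧ x ∈ U ∧ U ⊆ Set.Iic x) := by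
    intro x
    rcases da_key (x : DoubleArrow) with ⟨U, hU, hxU, hUI⟩ | ⟨U, hU, hxU, hUI⟩
    · exact Or.inl ⟨Subtype.val ⁻¹' U, hU.preimage continuous_subtype_val, hxU,
        fun y hy => show x ≤ y from Subtype.coe_le_coe.mp (hUI hy)⟩
    · exact Or.inr ⟨Subtype.val ⁻¹' U, hU.preimage continuous_subtype_val, hxU,
        fun y hy => show y ≤ x from Subtype.coe_le_coe.mp (hUI hy)⟩
  have huniv : (Set.univ : Set ↥L).Countable := by
    refine ((countable_minpts (X := ↥L)).union (countable_maxpts (X := ↥L))).mono ?_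
    intro x _
    exact (key x).elim Or.inl Or.inr
  rw [← Set.countable_coe_iff]
  exact Set.countable_univ_iff.mp huniv
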